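/- Let φ ∈ Φ_w be a weak Φ-function on a measure space that satisfies (aDec)_1 with constant L (i.e., t ↦ φ(t)/t is almost decreasing). Then there exists a concave Φ-prefunction ψ with ψ ≈ φ (with constants depending only on L), and consequently the reverse Jensen inequality holds: for every f ∈ L¹(Ω) with Ω of finite positive measure, ⨍_Ω φ(|f|) dx ≤ C φ(⨍_Ω |f| dx), with C depending only on L. -/

import Mathlib

open Set Filter MeasureTheory

/-- A weak Φ-function satisfying (aDec)_1 with constant `L` is
equivalent to a concave Φ-prefunction, and consequently the reverse Jensen
inequality holds, with constants depending only on `L`. -/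
theorem stmt18 (L : ℝ) (hL : 1 ≤ L) :
    ∃ C : ℝ, 1 ≤ C ∧
      ∀ φ : ℝ → ℝ,
        (∀ t : ℝ, 0 ≤ t → 0 ≤ φ t) →
        MonotoneOn φ (Set.Ici 0) →
        φ 0 = 0 →
        Tendsto φ (nhdsWithin 0 (Set.Ioi 0)) (nhds 0) →
        Tendsto φ atTop atTop →
        (∃ L₁ : ℝ, 1 ≤ L₁ ∧
          ∀ s t : ℝ, 0 < s → s ≤ t → φ s / s ≤ L₁ * (φ t / t)) →
        (∀ s t : ℝ, 0 < s → s ≤ t → φ t / t ≤ L * (φ s / s)) →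
        (∃ ψ : ℝ → ℝ, ConcaveOn ℝ (Set.Ici 0) ψ ∧
            MonotoneOn ψ (Set.Ici 0) ∧ ψ 0 = 0 ∧
            Tendsto ψ (nhdsWithin 0 (Set.Ioi 0)) (nhds 0) ∧
            Tendsto ψ atTop atTop ∧
            (∀ t : ℝ, 0 ≤ t → C⁻¹ * ψ t ≤ φ t ∧ φ t ≤ C * ψ t)) ∧
          ∀ (α : Type) [inst : MeasurableSpace α] (μ : Measure α),
            0 < μ Set.univ → μ Set.univ < ⊤ →
            ∀ f : α → ℝ, Integrable f μ →
              (⨍ x, φ |f x| ∂μ) ≤ C * φ (⨍ x, |f x| ∂μ) := by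
  refine ⟨1 + L, by linarith, ?_⟩
  intro φ hφnn hmono hφ0 hφzero hφtop hIncE hDec
  obtain ⟨L₁, hL₁, hInc⟩ := hIncE
  have hC : (0:ℝ) < 1 + L := by linarith
  have hφ1 : 0 ≤ φ 1 := hφnn 1 one_pos.le
  -- the set of values at `t` of affine majorants of `φ` with nonnegative slope
  set S : ℝ → Set ℝ := fun t =>
    {y | ∃ c d : ℝ, 0 ≤ d ∧ (∀ s, 0 ≤ s → φ s ≤ c + d * s) ∧ y = c + d * t} with hSdef
  set ψ : ℝ → ℝ := fun t => sInf (S t) with hψdef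
  -- a global affine majorant
  have hglob : ∀ s, 0 ≤ s → φ s ≤ φ 1 + (L * φ 1) * s := by
    intro s hs
    rcases le_or_gt s 1 with h | h
    · have h1 := hmono (Set.mem_Ici.mpr hs) (Set.mem_Ici.mpr zero_le_one) h
      nlinarith [mul_nonneg (mul_nonneg (by linarith : (0:ℝ) ≤ L) hφ1) hs]
    · have h1 := hDec 1 s one_pos h.le
      rw [div_one] at h1
      have h2 := (div_le_iff₀ (by linarith : (0:ℝ) < s)).mp h1
      linarith
  have hdglob : 0 ≤ L * φ 1 := mul_nonneg (by linarith) hφ1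
  have hne : ∀ t : ℝ, (S t).Nonempty := fun t =>
    ⟨φ 1 + (L * φ 1) * t, φ 1, L * φ 1, hdglob, hglob, rfl⟩
  have hlb : ∀ t, 0 ≤ t → ∀ y ∈ S t, φ t ≤ y := by
    rintro t ht y ⟨c, d, hd, hm, rfl⟩
    exact hm t ht
  have hbdd : ∀ t, 0 ≤ t → BddBelow (S t) := fun t ht => ⟨φ t, fun y hy => hlb t ht y hy⟩
  have hφψ : ∀ t, 0 ≤ t → φ t ≤ ψ t := fun t ht => le_csInf (hne t) (hlb t ht)
  have hψnn : ∀ t, 0 ≤ t → 0 ≤ ψ t := fun t ht => (hφnn t ht).trans (hφψ t ht)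
  -- the key affine majorant through the point `t`
  have hmaj : ∀ t, 0 < t → ∀ s, 0 ≤ s → φ s ≤ φ t + (L * φ t / t) * s := by
    intro t ht s hs
    rcases le_or_gt s t with h | h
    · have h1 := hmono (Set.mem_Ici.mpr hs) (Set.mem_Ici.mpr ht.le) h
      have h2 : 0 ≤ (L * φ t / t) * s :=
        mul_nonneg (div_nonneg (mul_nonneg (by linarith) (hφnn t ht.le)) ht.le) hs
      linarith
    · have h1 := hDec t s ht h.le
      have h2 := (div_le_iff₀ (lt_trans ht h)).mp h1
      have h3 : L * (φ t / t) * s = (L * φ t / t) * s := by ring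
      have h4 := hφnn t ht.le
      linarith [h3 ▸ h2]
  have hdmaj : ∀ t : ℝ, 0 < t → 0 ≤ L * φ t / t := fun t ht =>
    div_nonneg (mul_nonneg (by linarith) (hφnn t ht.le)) ht.le
  have hψle : ∀ t, 0 < t → ψ t ≤ (1 + L) * φ t := by
    intro t ht
    have hmem : φ t + L * φ t ∈ S t := by
      refine ⟨φ t, L * φ t / t, hdmaj t ht, hmaj t ht, ?_⟩
      rw [div_mul_cancel₀ _ ht.ne']
    calc ψ t ≤ φ t + L * φ t := csInf_le (hbdd t ht.le) hmem
    _ = (1 + L) * φ t := by ring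
  have hψ0 : ψ 0 = 0 := by
    refine le_antisymm ?_ (by simpa [hφ0] using hφψ 0 le_rfl)
    have hmaj0 : ∀ s, 0 ≤ s → φ s ≤ 0 + ((L₁ + L) * φ 1) * s := by
      intro s hs
      rcases eq_or_lt_of_le hs with h | h
      · simp [← h, hφ0]
      rcases le_or_gt s 1 with h1 | h1
      · have h2 := hInc s 1 h h1
        rw [div_one] at h2
        have h3 := (div_le_iff₀ h).mp h2
        nlinarith [mul_nonneg (mul_nonneg (by linarith : (0:ℝ) ≤ L) hφ1) hs]
      · have h2 := hDec 1 s one_pos h1.le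
        rw [div_one] at h2
        have h3 := (div_le_iff₀ (lt_trans one_pos h1)).mp h2
        nlinarith [mul_nonneg (mul_nonneg (by linarith : (0:ℝ) ≤ L₁) hφ1) hs]
    have h0 : (0:ℝ) + ((L₁ + L) * φ 1) * 0 = 0 := by ring
    have hmem : (0:ℝ) ∈ S 0 :=
      ⟨0, (L₁ + L) * φ 1, by nlinarith, hmaj0, h0.symm⟩
    exact csInf_le (hbdd 0 le_rfl) hmem
  have hψmono : MonotoneOn ψ (Set.Ici 0) := by
    intro a ha b hb hab
    refine le_csInf (hne b) ?_
    rintro y ⟨c, d, hd, hm, rfl⟩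
    have h1 : ψ a ≤ c + d * a := csInf_le (hbdd a ha) ⟨c, d, hd, hm, rfl⟩
    nlinarith [mul_le_mul_of_nonneg_left hab hd]
  have hconc : ConcaveOn ℝ (Set.Ici 0) ψ := by
    refine ⟨convex_Ici 0, ?_⟩
    intro x hx y hy a b ha hb hab
    simp only [smul_eq_mul]
    refine le_csInf (hne _) ?_
    rintro z ⟨c, d, hd, hm, rfl⟩
    have h1 : ψ x ≤ c + d * x := csInf_le (hbdd x hx) ⟨c, d, hd, hm, rfl⟩
    have h2 : ψ y ≤ c + d * y := csInf_le (hbdd y hy) ⟨c, d, hd, hm, rfl⟩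
    have h3 := mul_le_mul_of_nonneg_left h1 ha
    have h4 := mul_le_mul_of_nonneg_left h2 hb
    have h5 : a * (c + d * x) + b * (c + d * y) = c + d * (a * x + b * y) := by
      linear_combination c * hab
    linarith
  have hψzero : Tendsto ψ (nhdsWithin 0 (Set.Ioi 0)) (nhds 0) := by
    have hupper : Tendsto (fun t => (1 + L) * φ t) (nhdsWithin 0 (Set.Ioi 0)) (nhds 0) := by
      simpa using hφzero.const_mul (1 + L)
    refine tendsto_of_tendsto_of_tendsto_of_le_of_le' tendsto_const_nhds hupper ?_ ?_
    · exact eventually_mem_nhdsWithin.mono fun t ht => hψnn t (le_of_lt ht)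
    · exact eventually_mem_nhdsWithin.mono fun t ht => hψle t ht
  have hψtop : Tendsto ψ atTop atTop :=
    tendsto_atTop_mono' atTop ((eventually_ge_atTop 0).mono fun t ht => hφψ t ht) hφtop
  have hequiv : ∀ t : ℝ, 0 ≤ t → (1 + L)⁻¹ * ψ t ≤ φ t ∧ φ t ≤ (1 + L) * ψ t := by
    intro t ht
    rcases eq_or_lt_of_le ht with h | h
    · constructor <;> simp [← h, hψ0, hφ0]
    · have h1 := hψle t h
      have h2 := hφψ t ht
      have h3 := hψnn t ht
      constructor
      · have h4 := mul_le_mul_of_nonneg_left h1 (inv_nonneg.mpr hC.le)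
        rwa [← mul_assoc, inv_mul_cancel₀ hC.ne', one_mul] at h4
      · nlinarith
  refine ⟨⟨ψ, hconc, hψmono, hψ0, hψzero, hψtop, hequiv⟩, ?_⟩
  -- reverse Jensen inequality
  intro α inst μ hμ0 hμT f hf
  haveI : IsFiniteMeasure μ := ⟨hμT⟩
  have hm : (0:ℝ) < (μ Set.univ).toReal := ENNReal.toReal_pos hμ0.ne' hμT.ne
  have habs : Integrable (fun x => |f x|) μ := hf.abs
  -- measurability and integrability of φ ∘ |f|
  have hφm : Measurable (fun t : ℝ => φ (max t 0)) := by
    apply Monotone.measurable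
    intro a b hab
    exact hmono (Set.mem_Ici.mpr (le_max_right a 0)) (Set.mem_Ici.mpr (le_max_right b 0))
      (max_le_max hab le_rfl)
  have hmeas : AEStronglyMeasurable (fun x => φ |f x|) μ := by
    have h1 : AEMeasurable (fun x => φ (max |f x| 0)) μ :=
      hφm.comp_aemeasurable habs.1.aemeasurable
    refine h1.aestronglyMeasurable.congr ?_
    filter_upwards with x
    rw [max_eq_left (abs_nonneg _)]
  have hint : Integrable (fun x => φ |f x|) μ := by
    refine Integrable.mono (g := fun x => φ 1 + L * φ 1 * |f x|)
      ((integrable_const (φ 1)).add (habs.const_mul (L * φ 1))) hmeas ?_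
    filter_upwards with x
    have h1 := hglob (|f x|) (abs_nonneg _)
    have h2 := hφnn (|f x|) (abs_nonneg _)
    have h3 : 0 ≤ (L * φ 1) * |f x| := mul_nonneg hdglob (abs_nonneg _)
    rw [Real.norm_eq_abs, Real.norm_eq_abs, abs_of_nonneg h2,
      abs_of_nonneg (by linarith : (0:ℝ) ≤ φ 1 + (L * φ 1) * |f x|)]
    exact h1
  set tb := ⨍ x, |f x| ∂μ with htbdef
  have htb : tb = ((μ Set.univ).toReal)⁻¹ * ∫ x, |f x| ∂μ := by
    rw [htbdef, average_eq, smul_eq_mul]; rfl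
  have hInn : 0 ≤ ∫ x, |f x| ∂μ := integral_nonneg fun x => abs_nonneg _
  have htbnn : 0 ≤ tb := by rw [htb]; positivity
  have havg : ⨍ x, φ |f x| ∂μ = ((μ Set.univ).toReal)⁻¹ * ∫ x, φ |f x| ∂μ := by
    rw [average_eq, smul_eq_mul]; rfl
  rcases eq_or_lt_of_le htbnn with h0 | h0
  · -- degenerate case: the average of |f| is zero, so f = 0 a.e.
    have hI0 : ∫ x, |f x| ∂μ = 0 := by
      by_contra hne0
      have hpos : 0 < ∫ x, |f x| ∂μ := lt_of_le_of_ne hInn (Ne.symm hne0)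
      have : 0 < tb := by rw [htb]; positivity
      linarith [h0]
    have hae : (fun x => |f x|) =ᵐ[μ] 0 :=
      (integral_eq_zero_iff_of_nonneg (fun x => abs_nonneg _) habs).mp hI0
    have hzero : (fun x => φ |f x|) =ᵐ[μ] 0 := by
      filter_upwards [hae] with x hx
      have hx' : |f x| = 0 := hx
      simp [hx', hφ0]
    have : ⨍ x, φ |f x| ∂μ = 0 := by
      rw [havg]
      have : ∫ x, φ |f x| ∂μ = 0 := by rw [integral_congr_ae hzero]; simp
      rw [this, mul_zero]
    rw [this, ← h0, hφ0, mul_zero]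
  · -- main case: use the affine majorant through tb
    have hintR : Integrable (fun x => φ tb + (L * φ tb / tb) * |f x|) μ :=
      (integrable_const (φ tb)).add (habs.const_mul (L * φ tb / tb))
    have h1 : ∫ x, φ |f x| ∂μ ≤ ∫ x, (φ tb + (L * φ tb / tb) * |f x|) ∂μ :=
      integral_mono hint hintR fun x => hmaj tb h0 (|f x|) (abs_nonneg _)
    have h2 : ∫ x, (φ tb + (L * φ tb / tb) * |f x|) ∂μ
        = φ tb * (μ Set.univ).toReal + (L * φ tb / tb) * ∫ x, |f x| ∂μ := by
      rw [integral_add (integrable_const _) (habs.const_mul _), integral_const, smul_eq_mul,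
        integral_const_mul, mul_comm (μ.real Set.univ), Measure.real]
    rw [h2] at h1
    have h3 := mul_le_mul_of_nonneg_left h1 (inv_nonneg.mpr hm.le)
    have h4 : ((μ Set.univ).toReal)⁻¹ *
        (φ tb * (μ Set.univ).toReal + (L * φ tb / tb) * ∫ x, |f x| ∂μ)
        = φ tb * (((μ Set.univ).toReal)⁻¹ * (μ Set.univ).toReal)
          + (L * φ tb / tb) * (((μ Set.univ).toReal)⁻¹ * ∫ x, |f x| ∂μ) := by ring
    rw [h4, inv_mul_cancel₀ hm.ne', mul_one, ← htb, div_mul_cancel₀ _ h0.ne'] at h3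
    rw [havg]
    calc ((μ Set.univ).toReal)⁻¹ * ∫ x, φ |f x| ∂μ ≤ φ tb + L * φ tb := h3
    _ = (1 + L) * φ tb := by ring
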